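/- For r = 4, the maximum of F(ξ_1,...,ξ_5) = ∏_{j > i+1} (ξ_j − ξ_i) over −1 ≤ ξ_1 ≤ ... ≤ ξ_5 ≤ 1 is attained exactly at ξ_1 = ξ_2 = −1, ξ_3 = 0, ξ_4 = ξ_5 = 1. -/

import Mathlib

lemma stmt13_expand (f : Fin 5 → ℝ) :
    (∏ i : Fin 5, ∏ j ∈ (Finset.Ioi i).filter (fun j : Fin 5 => (i : ℕ) + 1 < (j : ℕ)), (f j - f i))
    = (f 2 - f 0) * (f 3 - f 0) * (f 4 - f 0) * ((f 3 - f 1) * (f 4 - f 1)) * (f 4 - f 2) := by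
  have h0 : (Finset.Ioi (0:Fin 5)).filter (fun j : Fin 5 => (0:Fin 5).val + 1 < (j : ℕ)) = {2,3,4} := by decide
  have h1 : (Finset.Ioi (1:Fin 5)).filter (fun j : Fin 5 => (1:Fin 5).val + 1 < (j : ℕ)) = {3,4} := by decide
  have h2 : (Finset.Ioi (2:Fin 5)).filter (fun j : Fin 5 => (2:Fin 5).val + 1 < (j : ℕ)) = {4} := by decide
  have h3 : (Finset.Ioi (3:Fin 5)).filter (fun j : Fin 5 => (3:Fin 5).val + 1 < (j : ℕ)) = ∅ := by decide
  have h4 : (Finset.Ioi (4:Fin 5)).filter (fun j : Fin 5 => (4:Fin 5).val + 1 < (j : ℕ)) = ∅ := by decide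
  rw [Fin.prod_univ_five, h0, h1, h2, h3, h4,
    Finset.prod_insert (by decide), Finset.prod_insert (by decide), Finset.prod_singleton,
    Finset.prod_insert (by decide), Finset.prod_singleton, Finset.prod_singleton,
    Finset.prod_empty, Finset.prod_empty]
  ring

lemma stmt13_key_le (a b c d e : ℝ) (h0 : -1 ≤ a) (h1 : a ≤ b) (h2 : b ≤ c) (h3 : c ≤ d)
    (h4 : d ≤ e) (h5 : e ≤ 1) :
    (c - a) * (d - a) * (e - a) * ((d - b) * (e - b)) * (e - c) ≤ 16 := by
  have hca : 0 ≤ c - a := by linarith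
  have hda : 0 ≤ d - a := by linarith
  have hea : 0 ≤ e - a := by linarith
  have hdb : 0 ≤ d - b := by linarith
  have heb : 0 ≤ e - b := by linarith
  have hec : 0 ≤ e - c := by linarith
  have step : (c - a) * (d - a) * (e - a) * ((d - b) * (e - b)) * (e - c)
      ≤ (c + 1) * 2 * 2 * (2 * 2) * (1 - c) := by
    have : 0 ≤ 1 - c := by linarith
    gcongr <;> linarith
  nlinarith [sq_nonneg c]

lemma stmt13_factor_max (u R B : ℝ) (hu : u ≤ 1) (hR : R ≤ B) (hR0 : 0 ≤ R) (hB : 0 < B)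
    (h : B ≤ u * R) : u = 1 ∧ R = B := by
  have h1 : u * R ≤ 1 * R := mul_le_mul_of_nonneg_right hu hR0
  have hRB : R = B := by linarith
  subst hRB
  exact ⟨by nlinarith, rfl⟩

lemma stmt13_key_eq (a b c d e : ℝ) (h0 : -1 ≤ a) (h1 : a ≤ b) (h2 : b ≤ c) (h3 : c ≤ d)
    (h4 : d ≤ e) (h5 : e ≤ 1)
    (hP : 16 ≤ (c - a) * (d - a) * (e - a) * ((d - b) * (e - b)) * (e - c)) :
    a = -1 ∧ b = -1 ∧ c = 0 ∧ d = 1 ∧ e = 1 := by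
  have hca : 0 ≤ c - a := by linarith
  have hda : 0 ≤ d - a := by linarith
  have hea : 0 ≤ e - a := by linarith
  have hdb : 0 ≤ d - b := by linarith
  have heb : 0 ≤ e - b := by linarith
  have hec : 0 ≤ e - c := by linarith
  have step : (c - a) * (d - a) * (e - a) * ((d - b) * (e - b)) * (e - c)
      ≤ (c + 1) * 2 * 2 * (2 * 2) * (1 - c) := by
    have : 0 ≤ 1 - c := by linarith
    gcongr <;> linarith
  have hc : c = 0 := by nlinarith [sq_nonneg c]
  subst hc
  have he0 : 0 ≤ e := by linarith
  have ha : a = -1 := by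
    have hR : (d - a) * (e - a) * ((d - b) * (e - b)) * e ≤ 2 * 2 * (2 * 2) * 1 := by
      gcongr <;> linarith
    have hR0 : 0 ≤ (d - a) * (e - a) * ((d - b) * (e - b)) * e :=
      mul_nonneg (mul_nonneg (mul_nonneg hda hea) (mul_nonneg hdb heb)) he0
    have hrw : (-a) * ((d - a) * (e - a) * ((d - b) * (e - b)) * e)
        = (0 - a) * (d - a) * (e - a) * ((d - b) * (e - b)) * (e - 0) := by ring
    have huR : 16 ≤ (-a) * ((d - a) * (e - a) * ((d - b) * (e - b)) * e) := by
      rw [hrw]; linarith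
    have := stmt13_factor_max (-a) _ 16 (by linarith) (by linarith) hR0 (by norm_num) huR
    linarith [this.1]
  subst ha
  have he : e = 1 := by
    have hS : (0 - -1) * (d - -1) * (e - -1) * ((d - b) * (e - b)) ≤ 1 * 2 * 2 * (2 * 2) := by
      gcongr <;> linarith
    have hS0 : 0 ≤ (0 - -1) * (d - -1) * (e - -1) * ((d - b) * (e - b)) :=
      mul_nonneg (mul_nonneg (mul_nonneg hca hda) hea) (mul_nonneg hdb heb)
    have hrw : e * ((0 - -1) * (d - -1) * (e - -1) * ((d - b) * (e - b)))
        = (0 - -1) * (d - -1) * (e - -1) * ((d - b) * (e - b)) * (e - 0) := by ring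
    have hvS : 16 ≤ e * ((0 - -1) * (d - -1) * (e - -1) * ((d - b) * (e - b))) := by
      rw [hrw]; linarith
    exact (stmt13_factor_max e _ 16 h5 (by linarith) hS0 (by norm_num) hvS).1
  subst he
  have hd : d = 1 := by
    have h8 : (d - b) * (1 - b) ≤ 2 * 2 := by gcongr <;> linarith
    have h8' : 0 ≤ (d - b) * (1 - b) := mul_nonneg hdb heb
    have hu : (d + 1) / 2 ≤ 1 := by linarith
    have hrw : ((d + 1) / 2) * (((d - b) * (1 - b)) * 4)
        = (0 - -1) * (d - -1) * (1 - -1) * ((d - b) * (1 - b)) * (1 - 0) := by ring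
    have h16 : 16 ≤ ((d + 1) / 2) * (((d - b) * (1 - b)) * 4) := by rw [hrw]; linarith
    have := stmt13_factor_max ((d + 1) / 2) _ 16 hu (by linarith) (by linarith) (by norm_num) h16
    linarith [this.1]
  subst hd
  have hb : b = -1 := by nlinarith [sq_nonneg (1 - b), sq_nonneg (1 + b)]
  exact ⟨rfl, hb, rfl, rfl, rfl⟩

/-- For r = 4, the maximum of F(ξ) = ∏_{j > i+1} (ξ_j - ξ_i) over
-1 ≤ ξ_1 ≤ ... ≤ ξ_5 ≤ 1 is attained exactly at ξ = (-1, -1, 0, 1, 1). -/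
theorem stmt13 (ξ : Fin 5 → ℝ) (hmono : Monotone ξ)
    (hI : ∀ i, ξ i ∈ Set.Icc (-1 : ℝ) 1) :
    (∀ η : Fin 5 → ℝ, Monotone η → (∀ i, η i ∈ Set.Icc (-1 : ℝ) 1) →
      (∏ i : Fin 5,
          ∏ j ∈ (Finset.Ioi i).filter (fun j : Fin 5 => (i : ℕ) + 1 < (j : ℕ)),
            (η j - η i)) ≤
        ∏ i : Fin 5,
          ∏ j ∈ (Finset.Ioi i).filter (fun j : Fin 5 => (i : ℕ) + 1 < (j : ℕ)),
            (ξ j - ξ i)) ↔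
      (ξ 0 = -1 ∧ ξ 1 = -1 ∧ ξ 2 = 0 ∧ ξ 3 = 1 ∧ ξ 4 = 1) := by
  have h01 : ξ 0 ≤ ξ 1 := hmono (by decide : (0:Fin 5) ≤ 1)
  have h12 : ξ 1 ≤ ξ 2 := hmono (by decide : (1:Fin 5) ≤ 2)
  have h23 : ξ 2 ≤ ξ 3 := hmono (by decide : (2:Fin 5) ≤ 3)
  have h34 : ξ 3 ≤ ξ 4 := hmono (by decide : (3:Fin 5) ≤ 4)
  have hl : -1 ≤ ξ 0 := (hI 0).1
  have hr : ξ 4 ≤ 1 := (hI 4).2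
  constructor
  · intro h
    have hμmono : Monotone (![(-1:ℝ), -1, 0, 1, 1]) := by
      apply Fin.monotone_iff_le_succ.mpr
      intro i
      fin_cases i <;> norm_num [Matrix.cons_val_two, Matrix.cons_val_three, Matrix.cons_val_four]
    have hμI : ∀ i, (![(-1:ℝ), -1, 0, 1, 1]) i ∈ Set.Icc (-1 : ℝ) 1 := by
      intro i; fin_cases i <;> norm_num
    have h16 := h _ hμmono hμI
    rw [stmt13_expand, stmt13_expand ξ] at h16
    norm_num [Matrix.cons_val_two, Matrix.cons_val_three, Matrix.cons_val_four] at h16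
    exact stmt13_key_eq _ _ _ _ _ hl h01 h12 h23 h34 hr h16
  · rintro ⟨h0, h1, h2, h3, h4⟩ η hηm hηI
    rw [stmt13_expand η, stmt13_expand ξ, h0, h1, h2, h3, h4]
    have := stmt13_key_le (η 0) (η 1) (η 2) (η 3) (η 4) (hηI 0).1
      (hηm (by decide : (0:Fin 5) ≤ 1)) (hηm (by decide : (1:Fin 5) ≤ 2))
      (hηm (by decide : (2:Fin 5) ≤ 3)) (hηm (by decide : (3:Fin 5) ≤ 4)) (hηI 4).2
    norm_num
    linarith
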